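/- Let G be a graph on n vertices and H a graph on m vertices, and let G[H] denote their lexicographic product: the graph on vertex set V(G) × V(H) in which (u,x) and (v,y) are adjacent if and only if either uv is an edge of G, or u = v and xy is an edge of H. Then I(Net, G[H]) ≥ n·I(Net, H) + m⁶·I(Net, G). -/

import Mathlib

open SimpleGraph

/-- Number of vertex subsets of `G` whose induced subgraph is isomorphic to `H`. -/
noncomputable def inducedCount {α β : Type*} [Fintype α] [Fintype β]
    (H : SimpleGraph α) (G : SimpleGraph β) : ℕ :=
  Set.ncard {S : Finset β | Nonempty (H ≃g (G.induce (S : Set β)))}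

/-- Maximum of `inducedCount H G` over all graphs `G` on `n` vertices. -/
noncomputable def maxCount {α : Type*} [Fintype α] (H : SimpleGraph α) (n : ℕ) : ℕ :=
  sSup {m | ∃ G : SimpleGraph (Fin n), inducedCount H G = m}

/-- The net graph: a triangle on `{3,4,5}` with pendant vertices `0,1,2`
attached to `3,4,5` respectively (0-indexed version of vertices 1..6). -/
def netGraph : SimpleGraph (Fin 6) :=
  SimpleGraph.fromRel (fun a b =>
    (a = 3 ∧ b = 4) ∨ (a = 4 ∧ b = 5) ∨ (a = 3 ∧ b = 5) ∨
    (a = 0 ∧ b = 3) ∨ (a = 1 ∧ b = 4) ∨ (a = 2 ∧ b = 5))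

/-- `N(n)`: the maximum number of induced copies of the net among graphs on `n` vertices. -/
noncomputable def netMax (n : ℕ) : ℕ := maxCount netGraph n

/-- The lexicographic product `G[H]`: `(u,x)` and `(v,y)` are adjacent iff
`uv` is an edge of `G`, or `u = v` and `xy` is an edge of `H`. -/
def lexProd {α β : Type*} (G : SimpleGraph α) (H : SimpleGraph β) :
    SimpleGraph (α × β) where
  Adj p q := G.Adj p.1 q.1 ∨ (p.1 = q.1 ∧ H.Adj p.2 q.2)
  symm := ⟨by
    rintro p q (h | ⟨h1, h2⟩)
    · exact Or.inl h.symm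
    · exact Or.inr ⟨h1.symm, h2.symm⟩⟩
  loopless := ⟨by
    rintro p (h | ⟨_, h2⟩)
    · exact G.irrefl h
    · exact H.irrefl h2⟩

open Classical in
lemma inducedCount_eq_card {α β : Type*} [Fintype α] [Fintype β]
    (H : SimpleGraph α) (G : SimpleGraph β) :
    inducedCount H G =
      (Finset.univ.filter
        (fun S : Finset β => Nonempty (H ≃g (G.induce (S : Set β))))).card := by
  classical
  rw [inducedCount, Set.ncard_eq_toFinset_card']
  congr 1
  ext S
  simp

lemma card_of_iso {α β : Type*} [Fintype α] {Gr : SimpleGraph β} {K : SimpleGraph α}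
    {S : Finset β} (h : Nonempty (K ≃g Gr.induce (S : Set β))) :
    S.card = Fintype.card α := by
  obtain ⟨e⟩ := h
  have h1 := Nat.card_congr e.toEquiv
  simpa [Nat.card_coe_set_eq, Set.ncard_coe_finset, Nat.card_eq_fintype_card] using h1.symm

def fiberEmb {α β : Type*} (u : α) : β ↪ α × β :=
  ⟨fun x => (u, x), fun a b h => congrArg Prod.snd h⟩

noncomputable def fiberIso {α β : Type*} (G : SimpleGraph α) (H : SimpleGraph β)
    [DecidableEq β] (u : α) (S : Finset β) :
    H.induce (S : Set β) ≃g (lexProd G H).induce ((S.map (fiberEmb u) : Finset (α × β)) : Set (α × β)) := by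
  refine ⟨Equiv.ofBijective (fun x => ⟨(u, x.1), by
    simp only [Finset.coe_map, Set.mem_image, Finset.mem_coe]
    exact ⟨x.1, x.2, rfl⟩⟩) ⟨?_, ?_⟩, ?_⟩
  · intro a b hab
    exact Subtype.ext (congrArg (fun p => (p : α × β).2) (Subtype.ext_iff.mp hab))
  · rintro ⟨p, hp⟩
    simp only [Finset.coe_map, Set.mem_image, Finset.mem_coe] at hp
    obtain ⟨a, ha, heq⟩ := hp
    exact ⟨⟨a, ha⟩, Subtype.ext heq⟩
  · intro a b
    simp only [Equiv.ofBijective_apply, comap_adj, Function.Embedding.coe_subtype]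
    constructor
    · rintro (h | ⟨_, h⟩)
      · exact absurd h G.irrefl
      · exact h
    · intro h
      exact Or.inr ⟨rfl, h⟩

noncomputable def liftIso {α β : Type*} (G : SimpleGraph α) (H : SimpleGraph β)
    [DecidableEq α] [DecidableEq β] (T : Finset α) (g : {v // v ∈ T} → β) :
    G.induce (T : Set α) ≃g
      (lexProd G H).induce ((T.attach.image (fun v => (v.1, g v)) : Finset (α × β)) : Set (α × β)) := by
  refine ⟨Equiv.ofBijective (fun v => ⟨(v.1, g ⟨v.1, v.2⟩), by
    simp only [Finset.coe_image, Set.mem_image, Finset.mem_coe, Finset.mem_attach]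
    exact ⟨⟨v.1, v.2⟩, trivial, rfl⟩⟩) ⟨?_, ?_⟩, ?_⟩
  · intro a b hab
    exact Subtype.ext (congrArg (fun p => (p : α × β).1) (Subtype.ext_iff.mp hab))
  · rintro ⟨p, hp⟩
    simp only [Finset.coe_image, Set.mem_image, Finset.mem_coe, Finset.mem_attach] at hp
    obtain ⟨w, _, heq⟩ := hp
    refine ⟨⟨w.1, w.2⟩, Subtype.ext ?_⟩
    exact heq
  · intro a b
    simp only [Equiv.ofBijective_apply, comap_adj, Function.Embedding.coe_subtype]
    constructor
    · rintro (h | ⟨h1, h2⟩)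
      · exact h
      · exfalso
        have : (⟨a.1, a.2⟩ : {v // v ∈ T}) = ⟨b.1, b.2⟩ := Subtype.ext h1
        have h2' : H.Adj (g ⟨a.1, a.2⟩) (g ⟨b.1, b.2⟩) := h2
        rw [this] at h2'
        exact H.irrefl h2'
    · intro h
      exact Or.inl h

theorem lexProd_net_count_lower_bound
    (n m : ℕ) (G : SimpleGraph (Fin n)) (H : SimpleGraph (Fin m)) :
    n * inducedCount netGraph H + m ^ 6 * inducedCount netGraph G ≤
      inducedCount netGraph (lexProd G H) := by
  classical
  rw [inducedCount_eq_card, inducedCount_eq_card, inducedCount_eq_card]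
  set A := Finset.univ.filter
    (fun S : Finset (Fin m) => Nonempty (netGraph ≃g H.induce (S : Set (Fin m)))) with hA
  set B := Finset.univ.filter
    (fun S : Finset (Fin n) => Nonempty (netGraph ≃g G.induce (S : Set (Fin n)))) with hB
  set C := Finset.univ.filter
    (fun S : Finset (Fin n × Fin m) =>
      Nonempty (netGraph ≃g (lexProd G H).induce (S : Set (Fin n × Fin m)))) with hC
  set f1 : Fin n × Finset (Fin m) → Finset (Fin n × Fin m) :=
    fun p => p.2.map (fiberEmb p.1) with hf1
  set f2 : (Σ T : Finset (Fin n), ({v // v ∈ T} → Fin m)) → Finset (Fin n × Fin m) :=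
    fun p => p.1.attach.image (fun v => (v.1, p.2 v)) with hf2
  set D1 := (Finset.univ ×ˢ A).image f1 with hD1
  set D2 := (B.sigma (fun T => (Finset.univ : Finset ({v // v ∈ T} → Fin m)))).image f2 with hD2
  have hcardA : ∀ S ∈ A, S.card = 6 := by
    intro S hS
    rw [hA, Finset.mem_filter] at hS
    simpa using card_of_iso hS.2
  have hcardB : ∀ S ∈ B, S.card = 6 := by
    intro S hS
    rw [hB, Finset.mem_filter] at hS
    simpa using card_of_iso hS.2
  -- images land in C
  have hD1C : D1 ⊆ C := by
    intro W hW
    rw [hD1, Finset.mem_image] at hW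
    obtain ⟨⟨u, S⟩, hmem, rfl⟩ := hW
    have hS : S ∈ A := (Finset.mem_product.mp hmem).2
    rw [hA, Finset.mem_filter] at hS
    obtain ⟨-, ⟨e⟩⟩ := hS
    exact Finset.mem_filter.mpr ⟨Finset.mem_univ _, ⟨e.trans (fiberIso G H u S)⟩⟩
  have hD2C : D2 ⊆ C := by
    intro W hW
    rw [hD2, Finset.mem_image] at hW
    obtain ⟨⟨T, g⟩, hmem, rfl⟩ := hW
    have hT : T ∈ B := (Finset.mem_sigma.mp hmem).1
    rw [hB, Finset.mem_filter] at hT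
    obtain ⟨-, ⟨e⟩⟩ := hT
    exact Finset.mem_filter.mpr ⟨Finset.mem_univ _, ⟨e.trans (liftIso G H T g)⟩⟩
  -- disjointness
  have hdis : Disjoint D1 D2 := by
    rw [Finset.disjoint_left]
    intro W hW1 hW2
    rw [hD1, Finset.mem_image] at hW1
    obtain ⟨⟨u, S⟩, hmem1, rfl⟩ := hW1
    have hS : S ∈ A := (Finset.mem_product.mp hmem1).2
    have h6 : S.card = 6 := hcardA S hS
    obtain ⟨a, ha, b, hb, hab⟩ := Finset.one_lt_card.mp (by omega : 1 < S.card)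
    rw [hD2, Finset.mem_image] at hW2
    obtain ⟨⟨T, g⟩, hmem2, heq⟩ := hW2
    have hma : (u, a) ∈ f2 ⟨T, g⟩ := by
      rw [heq, hf1]
      exact Finset.mem_map_of_mem _ ha
    have hmb : (u, b) ∈ f2 ⟨T, g⟩ := by
      rw [heq, hf1]
      exact Finset.mem_map_of_mem _ hb
    rw [hf2, Finset.mem_image] at hma hmb
    obtain ⟨w1, -, hw1⟩ := hma
    obtain ⟨w2, -, hw2⟩ := hmb
    have hw12 : w1 = w2 := by
      apply Subtype.ext
      have e1 : (w1 : Fin n) = u := congrArg Prod.fst hw1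
      have e2 : (w2 : Fin n) = u := congrArg Prod.fst hw2
      rw [e1, e2]
    apply hab
    have e1 : g w1 = a := congrArg Prod.snd hw1
    have e2 : g w2 = b := congrArg Prod.snd hw2
    rw [← e1, ← e2, hw12]
  -- cardinalities
  have hc1 : D1.card = n * A.card := by
    rw [hD1, Finset.card_image_of_injOn, Finset.card_product, Finset.card_univ,
      Fintype.card_fin]
    rintro ⟨u, S⟩ h1 ⟨u', S'⟩ h2 heq
    have hS : S ∈ A := (Finset.mem_product.mp h1).2
    have h6 : S.card = 6 := hcardA S hS
    obtain ⟨x, hx⟩ := Finset.card_pos.mp (by omega : 0 < S.card)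
    have hxm : (u, x) ∈ f1 (u', S') := by
      rw [← heq, hf1]
      exact Finset.mem_map_of_mem _ hx
    rw [hf1, Finset.mem_map] at hxm
    obtain ⟨y, -, hy⟩ := hxm
    have hu : u' = u := congrArg Prod.fst hy
    subst hu
    have hSS : S = S' := Finset.map_injective (fiberEmb u') (by rw [hf1] at heq; exact heq)
    rw [hSS]
  have hc2 : D2.card = m ^ 6 * B.card := by
    rw [hD2, Finset.card_image_of_injOn, Finset.card_sigma]
    · have hsum : ∀ T ∈ B, (Finset.univ : Finset ({v // v ∈ T} → Fin m)).card = m ^ 6 := by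
        intro T hT
        rw [Finset.card_univ, Fintype.card_fun, Fintype.card_fin, Fintype.card_coe,
          hcardB T hT]
      rw [Finset.sum_congr rfl hsum, Finset.sum_const, smul_eq_mul, mul_comm]
    · rintro ⟨T, g⟩ h1 ⟨T', g'⟩ h2 heq
      have hproj : ∀ (T0 : Finset (Fin n)) (g0 : {v // v ∈ T0} → Fin m),
          (f2 ⟨T0, g0⟩).image Prod.fst = T0 := by
        intro T0 g0
        rw [hf2]
        ext x
        simp only [Finset.mem_image]
        constructor
        · rintro ⟨p, ⟨w, -, rfl⟩, rfl⟩
          exact w.2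
        · intro hx
          exact ⟨(x, g0 ⟨x, hx⟩), ⟨⟨x, hx⟩, Finset.mem_attach _ _, rfl⟩, rfl⟩
      have hT : T = T' := by
        rw [← hproj T g, ← hproj T' g', heq]
      subst hT
      have hg : g = g' := by
        funext v
        have hv : (v.1, g v) ∈ f2 ⟨T, g'⟩ := by
          rw [← heq, hf2]
          exact Finset.mem_image_of_mem _ (Finset.mem_attach _ v)
        rw [hf2, Finset.mem_image] at hv
        obtain ⟨w, -, hw⟩ := hv
        have hwv : w = v := Subtype.ext (congrArg Prod.fst hw)
        have := congrArg Prod.snd hw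
        rw [hwv] at this
        exact this.symm
      rw [hg]
  calc n * A.card + m ^ 6 * B.card = D1.card + D2.card := by rw [hc1, hc2]
    _ = (D1 ∪ D2).card := (Finset.card_union_of_disjoint hdis).symm
    _ ≤ C.card := Finset.card_le_card (Finset.union_subset hD1C hD2C)
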